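/- Let P be future-directed timelike with κ := √(−η(P,P)), u a future-directed unit timelike vector, J antisymmetric, and let x^NW ∈ V satisfy the Newton–Wigner SSC Σ_ν S[x^NW]_{μν}(u^ν + P^ν/κ) = 0 for all μ. Then for any x ∈ V the following are equivalent: (a) the covector α with components α_ρ := Σ_σ (u^σ + P^σ/κ)S[x]_{σρ} is a scalar multiple of the covector with components u_ρ − P_ρ/κ (the reformulated centre-of-spin condition); (b) x − x^NW lies in the linear span of u and P. -/

import Mathlib

noncomputable section

open Finset

abbrev V4 := Fin 4 → ℝ

/-- Sign of the Minkowski metric diag(-1,1,1,1) on the diagonal. -/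
def sgn4 (μ : Fin 4) : ℝ := if μ = 0 then -1 else 1

/-- Index lowering with η = diag(-1,1,1,1): `lo v μ = v_μ`. -/
def lo (v : V4) : V4 := fun μ => sgn4 μ * v μ

/-- Minkowski bilinear form of signature (-,+,+,+). -/
def mink (v w : V4) : ℝ := ∑ μ, lo v μ * w μ

/-- Future-directed timelike vector. -/
def FDTimelike (v : V4) : Prop := mink v v < 0 ∧ 0 < v 0

/-- Future-directed unit timelike vector. -/
def FDUnit (u : V4) : Prop := mink u u = -1 ∧ 0 < u 0

/-- κ = √(−η(P,P)). -/
def kappa (P : V4) : ℝ := Real.sqrt (-(mink P P))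

/-- Spin tensor at the point x: S[x]_{μν} = J_{μν} − x_μ P_ν + x_ν P_μ. -/
def spinT (J : Fin 4 → Fin 4 → ℝ) (P x : V4) (μ ν : Fin 4) : ℝ :=
  J μ ν - lo x μ * lo P ν + lo x ν * lo P μ

/-- SSC worldline with respect to f: points where S[x]_{μν} f^ν = 0. -/
def SSCline (J : Fin 4 → Fin 4 → ℝ) (P f : V4) : Set V4 :=
  {x | ∀ μ, ∑ ν, spinT J P x μ ν * f ν = 0}

lemma mink_symm (v w : V4) : mink v w = mink w v := by
  unfold mink lo; exact Finset.sum_congr rfl fun μ _ => by ring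

lemma mink_neg_of_fd (P u : V4) (hP : FDTimelike P) (hu : FDUnit u) :
    mink u P < 0 := by
  obtain ⟨hP1, hP0⟩ := hP
  obtain ⟨hu1, hu0⟩ := hu
  simp only [mink, lo, sgn4, Fin.sum_univ_four,
    show (1 : Fin 4) ≠ 0 from by decide, show (2 : Fin 4) ≠ 0 from by decide,
    show (3 : Fin 4) ≠ 0 from by decide, if_true, if_false, if_neg, ite_true, ite_false,
    reduceIte] at *
  by_contra hcon
  push_neg at hcon
  have hS : u 0 * P 0 ≤ u 1 * P 1 + u 2 * P 2 + u 3 * P 3 := by nlinarith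
  have hCS : (u 1 * P 1 + u 2 * P 2 + u 3 * P 3) ^ 2
      ≤ (u 1 ^ 2 + u 2 ^ 2 + u 3 ^ 2) * (P 1 ^ 2 + P 2 ^ 2 + P 3 ^ 2) := by
    nlinarith [sq_nonneg (u 1 * P 2 - u 2 * P 1), sq_nonneg (u 1 * P 3 - u 3 * P 1),
      sq_nonneg (u 2 * P 3 - u 3 * P 2)]
  have hS2 : u 0 ^ 2 * P 0 ^ 2 ≤ (u 1 * P 1 + u 2 * P 2 + u 3 * P 3) ^ 2 := by
    nlinarith [mul_pos hu0 hP0]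
  have hQ0 : (0:ℝ) ≤ P 1 ^ 2 + P 2 ^ 2 + P 3 ^ 2 := by positivity
  nlinarith [mul_le_mul_of_nonneg_left (le_of_lt (show P 1 ^ 2 + P 2 ^ 2 + P 3 ^ 2 < P 0 ^ 2 by nlinarith)) (sq_nonneg (u 0))]

theorem statement5 (P u xNW x : V4) (J : Fin 4 → Fin 4 → ℝ)
    (hP : FDTimelike P) (hu : FDUnit u) (hJ : ∀ μ ν, J μ ν = - J ν μ)
    (hNW : ∀ μ, ∑ ν, spinT J P xNW μ ν * (u ν + P ν / kappa P) = 0) :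
    (∃ c : ℝ, ∀ ρ, (∑ σ, (u σ + P σ / kappa P) * spinT J P x σ ρ)
        = c * (lo u ρ - lo P ρ / kappa P))
    ↔ x - xNW ∈ Submodule.span ℝ ({u, P} : Set V4) := by
  set k : ℝ := kappa P with hkdef
  have hPP : mink P P < 0 := hP.1
  have hk0 : 0 < k := Real.sqrt_pos.mpr (by linarith)
  have hkne : k ≠ 0 := ne_of_gt hk0
  have hk2 : k ^ 2 = -(mink P P) := Real.sq_sqrt (by linarith)
  set f : V4 := fun ν => u ν + P ν / k with hfdef
  set δ : V4 := fun μ => x μ - xNW μ with hδdef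
  have hxδ : x - xNW = δ := rfl
  -- antisymmetry of the spin tensor
  have hSanti : ∀ (y : V4) (μ ν : Fin 4), spinT J P y μ ν = - spinT J P y ν μ := by
    intro y μ ν; simp only [spinT, hJ μ ν]; ring
  -- Newton-Wigner condition with the sum on the other side
  have hNW' : ∀ ρ, ∑ σ, f σ * spinT J P xNW σ ρ = 0 := by
    intro ρ
    have h1 : ∀ σ : Fin 4, f σ * spinT J P xNW σ ρ = -(spinT J P xNW ρ σ * f σ) := by
      intro σ; rw [hSanti xNW σ ρ]; ring
    rw [Finset.sum_congr rfl fun σ _ => h1 σ, Finset.sum_neg_distrib, hNW ρ, neg_zero]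
  -- decomposition of the covector
  have hdecomp : ∀ ρ, (∑ σ, f σ * spinT J P x σ ρ)
      = mink P f * lo δ ρ - mink δ f * lo P ρ := by
    intro ρ
    have h1 : ∀ σ : Fin 4, f σ * spinT J P x σ ρ
        = f σ * spinT J P xNW σ ρ + (lo P σ * f σ) * lo δ ρ - (lo δ σ * f σ) * lo P ρ := by
      intro σ
      simp only [spinT, lo, hδdef]
      ring
    rw [Finset.sum_congr rfl fun σ _ => h1 σ]
    rw [Finset.sum_sub_distrib, Finset.sum_add_distrib, hNW' ρ, zero_add,
      ← Finset.sum_mul, ← Finset.sum_mul]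
    rfl
  set a : ℝ := mink δ f with hadef
  set b : ℝ := mink P f with hbdef
  set e : ℝ := mink u P with hedef
  have hb : b = e - k := by
    have h1 : b = mink P u + mink P P / k := by
      rw [hbdef, mink, mink, mink, Finset.sum_div, ← Finset.sum_add_distrib]
      exact Finset.sum_congr rfl fun μ _ => by simp only [hfdef]; ring
    rw [h1, mink_symm P u, ← hedef]
    have hPPk : mink P P = -k ^ 2 := by linarith
    rw [hPPk]; field_simp; ring
  have he : e < 0 := mink_neg_of_fd P u hP hu
  have hbneg : b < 0 := by rw [hb]; linarith
  have hbne : b ≠ 0 := ne_of_lt hbneg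
  have huf : mink u f = b / k := by
    have h1 : mink u f = mink u u + mink u P / k := by
      rw [mink, mink, mink, Finset.sum_div, ← Finset.sum_add_distrib]
      exact Finset.sum_congr rfl fun μ _ => by simp only [hfdef]; ring
    rw [h1, hu.1, ← hedef, hb]; field_simp; ring
  have hsgn : ∀ ρ : Fin 4, sgn4 ρ = 1 ∨ sgn4 ρ = -1 := by
    intro ρ; unfold sgn4; split <;> simp
  constructor
  · rintro ⟨c, hc⟩
    rw [hxδ, Submodule.mem_span_pair]
    refine ⟨c / b, (a * k - c) / (k * b), ?_⟩
    funext ρ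
    have h1 := hc ρ
    rw [hdecomp ρ] at h1
    field_simp at h1
    have h2 : b * lo δ ρ * k = c * lo u ρ * k - c * lo P ρ + a * lo P ρ * k := by
      linear_combination h1
    simp only [lo] at h2
    have h3 : δ ρ * (b * k) = c * u ρ * k + (a * k - c) * P ρ := by
      rcases hsgn ρ with h | h <;> rw [h] at h2
      · linear_combination h2
      · linear_combination -h2
    have h4 : δ ρ = (c * u ρ * k + (a * k - c) * P ρ) / (b * k) := by
      rw [eq_div_iff (mul_ne_zero hbne hkne)]; linear_combination h3
    simp only [Pi.add_apply, Pi.smul_apply, smul_eq_mul]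
    rw [h4]; field_simp
  · intro hmem
    rw [hxδ, Submodule.mem_span_pair] at hmem
    obtain ⟨s, t, hst⟩ := hmem
    have hδρ : ∀ ρ, δ ρ = s * u ρ + t * P ρ := by
      intro ρ
      have := congrFun hst ρ
      simpa using this.symm
    have ha : a = s * (b / k) + t * b := by
      rw [← huf, hbdef, hadef, mink, mink, mink,
        Finset.mul_sum, Finset.mul_sum, ← Finset.sum_add_distrib]
      refine Finset.sum_congr rfl fun μ _ => ?_
      simp only [lo]
      rw [hδρ μ]; ring
    refine ⟨b * s, fun ρ => ?_⟩
    rw [hdecomp ρ]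
    have hloδ : lo δ ρ = s * lo u ρ + t * lo P ρ := by
      simp only [lo]; rw [hδρ ρ]; ring
    rw [hloδ, ha]
    field_simp
    ring
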